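/- Let $c_1 > 0$, $v_1 \in (-c_1,0)$, $\overline u < 0$ with $\overline u^2 + v_1^2 > c_1^2$. Define $\omega_- = \frac{v_1\overline u - c_1\sqrt{\overline u^2+v_1^2-c_1^2}}{c_1^2 - v_1^2}$, and define $\cos\Psi_0 = \frac{-c_1 v_1 + \overline u\sqrt{\overline u^2+v_1^2-c_1^2}}{\overline u^2 + v_1^2}$, $\sin\Psi_0 = \frac{c_1\overline u + v_1\sqrt{\overline u^2+v_1^2-c_1^2}}{\overline u^2+v_1^2}$. Then $\sin\Psi_0 = \frac{c_1}{\overline u + v_1\omega_-}$ and $\cos\Psi_0 = -\frac{c_1\,\omega_-}{\overline u + v_1\omega_-}$. -/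

import Mathlib

theorem stmt13 (c₁ v₁ u : ℝ) (hc : 0 < c₁) (hv : v₁ ∈ Set.Ioo (-c₁) 0) (hu : u < 0)
    (hhyp : u^2 + v₁^2 > c₁^2)
    (ω C S : ℝ)
    (hω : ω = (v₁ * u - c₁ * Real.sqrt (u^2 + v₁^2 - c₁^2)) / (c₁^2 - v₁^2))
    (hC : C = (-c₁ * v₁ + u * Real.sqrt (u^2 + v₁^2 - c₁^2)) / (u^2 + v₁^2))
    (hS : S = (c₁ * u + v₁ * Real.sqrt (u^2 + v₁^2 - c₁^2)) / (u^2 + v₁^2)) :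
    S = c₁ / (u + v₁ * ω) ∧ C = -(c₁ * ω / (u + v₁ * ω)) := by
  obtain ⟨hv1, hv2⟩ := hv
  set r := Real.sqrt (u^2 + v₁^2 - c₁^2) with hr
  have hrnn : 0 ≤ r := Real.sqrt_nonneg _
  have hr2 : r^2 = u^2 + v₁^2 - c₁^2 := Real.sq_sqrt (by nlinarith)
  have hcv : 0 < c₁^2 - v₁^2 := by nlinarith
  have huvpos : 0 < u^2 + v₁^2 := by nlinarith
  have hden : u * c₁ - v₁ * r ≠ 0 := by
    intro h
    have he : v₁ * r = u * c₁ := by linarith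
    have h2 : (v₁ * r)^2 = (u * c₁)^2 := by rw [he]
    nlinarith [mul_pos hcv huvpos]
  have hsum : u + v₁ * ω = c₁ * (u * c₁ - v₁ * r) / (c₁^2 - v₁^2) := by
    rw [hω]; field_simp; ring
  have hsumne : u + v₁ * ω ≠ 0 := by
    rw [hsum]
    exact div_ne_zero (mul_ne_zero (ne_of_gt hc) hden) (ne_of_gt hcv)
  have hden' : c₁ * u - v₁ * r ≠ 0 := by intro h; apply hden; linarith
  constructor
  · rw [hS, hsum]
    field_simp
    linear_combination (-v₁^2) * hr2
  · rw [hC, hsum, hω]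
    field_simp
    linear_combination (-v₁ * u) * hr2
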